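/- Let A be a finitely generated S-act such that every factor act A/ρ (for every congruence ρ on A) is co-Hopfian. Then A is strongly co-Hopfian: for every endomorphism f of A there exists m with im f^m = im f^{m+1}. -/
import Mathlib


structure RAct (S : Type*) [Monoid S] (A : Type*) where
  act : A → S → A
  act_one : ∀ a, act a 1 = a
  act_mul : ∀ a s t, act a (s * t) = act (act a s) t

variable {S : Type*} [Monoid S] {A B : Type*}

/-- `f` is an S-act homomorphism from `M` to `N`. -/
def IsHom (M : RAct S A) (N : RAct S B) (f : A → B) : Prop :=
  ∀ a s, f (M.act a s) = N.act (f a) s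

/-- `f` is an S-act endomorphism of `M`. -/
def IsEnd (M : RAct S A) (f : A → A) : Prop := IsHom M M f

/-- `r` is a congruence on the S-act `M`. -/
def IsCong (M : RAct S A) (r : A → A → Prop) : Prop :=
  Equivalence r ∧ ∀ a b s, r a b → r (M.act a s) (M.act b s)

/-- The kernel congruence `K_f`. -/
def kerC {A : Type*} (f : A → A) : A → A → Prop := fun a b => f a = f b

/-- The image congruence `I_f = (im f × im f) ∪ Δ`. -/
def imC {A : Type*} (f : A → A) : A → A → Prop :=
  fun a b => a = b ∨ (a ∈ Set.range f ∧ b ∈ Set.range f)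

/-- The diagonal relation. -/
def diagR (A : Type*) : A → A → Prop := fun a b => a = b

/-- The full relation. -/
def fullR (A : Type*) : A → A → Prop := fun _ _ => True

/-- `M` is strongly Hopfian: the chain `K_f ⊆ K_{f²} ⊆ ⋯` stabilizes for every endomorphism. -/
def StronglyHopfian (M : RAct S A) : Prop :=
  ∀ f : A → A, IsEnd M f → ∃ n : ℕ, 1 ≤ n ∧ ∀ m, n ≤ m → kerC (f^[m]) = kerC (f^[n])

/-- `M` is strongly co-Hopfian: the chain `I_f ⊇ I_{f²} ⊇ ⋯` stabilizes for every endomorphism. -/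
def StronglyCoHopfian (M : RAct S A) : Prop :=
  ∀ f : A → A, IsEnd M f → ∃ n : ℕ, 1 ≤ n ∧ ∀ m, n ≤ m → imC (f^[m]) = imC (f^[n])

/-- `M` is Hopfian: every surjective endomorphism is injective. -/
def Hopfian (M : RAct S A) : Prop :=
  ∀ f : A → A, IsEnd M f → Function.Surjective f → Function.Injective f

/-- `M` is co-Hopfian: every injective endomorphism is surjective. -/
def CoHopfian (M : RAct S A) : Prop :=
  ∀ f : A → A, IsEnd M f → Function.Injective f → Function.Surjective f

/-- ACC on congruences. -/
def NoetherianAct (M : RAct S A) : Prop :=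
  ∀ c : ℕ → (A → A → Prop), (∀ n, IsCong M (c n)) →
    (∀ n a b, c n a b → c (n + 1) a b) → ∃ N, ∀ m, N ≤ m → c m = c N

/-- DCC on congruences. -/
def ArtinianAct (M : RAct S A) : Prop :=
  ∀ c : ℕ → (A → A → Prop), (∀ n, IsCong M (c n)) →
    (∀ n a b, c (n + 1) a b → c n a b) → ∃ N, ∀ m, N ≤ m → c m = c N

/-- The monoid `S` as a right act over itself. -/
def mulAct (S : Type*) [Monoid S] : RAct S S :=
  ⟨fun x s => x * s, mul_one, fun a s t => (mul_assoc a s t).symm⟩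
/-- A congruence as a setoid. -/
def congSetoid {A : Type*} (r : A → A → Prop) (hr : Equivalence r) : Setoid A := ⟨r, hr⟩

/-- The factor act `A/ρ` of an S-act by a congruence `ρ`. -/
def congQuotAct (M : RAct S A) (r : A → A → Prop) (hr : IsCong M r) :
    RAct S (Quotient (congSetoid r hr.1)) where
  act := fun q s => Quotient.map' (fun a => M.act a s) (fun a b h => hr.2 a b s h) q
  act_one := by
    intro q
    induction q using Quotient.inductionOn'
    exact congrArg (Quotient.mk'' ·) (M.act_one _)
  act_mul := by
    intro q s t
    induction q using Quotient.inductionOn'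
    exact congrArg (Quotient.mk'' ·) (M.act_mul _ s t)

/-- If `A` is finitely generated and every factor act of `A` is co-Hopfian, then `A` is
strongly co-Hopfian. -/
theorem stmt19 (M : RAct S A)
    (hfg : ∃ (n : ℕ) (a : Fin n → A), ∀ x : A, ∃ (i : Fin n) (s : S), x = M.act (a i) s)
    (hco : ∀ (r : A → A → Prop) (hr : IsCong M r), CoHopfian (congQuotAct M r hr))
    (f : A → A) (hf : IsEnd M f) :
    ∃ m : ℕ, 1 ≤ m ∧ Set.range (f^[m]) = Set.range (f^[m + 1]) := by
  obtain ⟨n, a, ha⟩ := hfg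
  -- iterates are endomorphisms
  have hIter : ∀ (k : ℕ) (x : A) (s : S), f^[k] (M.act x s) = M.act (f^[k] x) s := by
    intro k
    induction k with
    | zero => intro x s; simp
    | succ k ih =>
      intro x s
      rw [Function.iterate_succ_apply', Function.iterate_succ_apply', ih, hf]
  -- equality at exponent k persists to larger exponents
  have hmono : ∀ (k l : ℕ) (x y : A), k ≤ l → f^[k] x = f^[k] y → f^[l] x = f^[l] y := by
    intro k l x y hkl h
    have : l = (l - k) + k := (Nat.sub_add_cancel hkl).symm
    rw [this, Function.iterate_add_apply, Function.iterate_add_apply, h]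
  set r : A → A → Prop := fun x y => ∃ k, f^[k] x = f^[k] y with hrdef
  have hrequiv : Equivalence r := by
    constructor
    · intro x; exact ⟨0, rfl⟩
    · rintro x y ⟨k, h⟩; exact ⟨k, h.symm⟩
    · rintro x y z ⟨k, h⟩ ⟨l, h'⟩
      exact ⟨max k l, (hmono k _ _ _ (le_max_left k l) h).trans
        (hmono l _ _ _ (le_max_right k l) h')⟩
  have hr : IsCong M r := by
    refine ⟨hrequiv, ?_⟩
    rintro x y s ⟨k, h⟩
    exact ⟨k, by rw [hIter, hIter, h]⟩
  -- induced endomorphism on the quotient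
  have hresp : ∀ x y, r x y → r (f x) (f y) := by
    rintro x y ⟨k, h⟩
    refine ⟨k, ?_⟩
    rw [← Function.iterate_succ_apply, ← Function.iterate_succ_apply,
      Function.iterate_succ_apply', Function.iterate_succ_apply', h]
  set F : Quotient (congSetoid r hr.1) → Quotient (congSetoid r hr.1) :=
    Quotient.map' f hresp with hFdef
  have hFend : IsEnd (congQuotAct M r hr) F := by
    intro q s
    induction q using Quotient.inductionOn'
    exact congrArg (Quotient.mk'' ·) (hf _ s)
  have hFinj : Function.Injective F := by
    intro q q'
    induction q using Quotient.inductionOn'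
    induction q' using Quotient.inductionOn'
    intro h
    have h' : r (f _) (f _) := Quotient.eq''.mp h
    obtain ⟨k, hk⟩ := h'
    refine Quotient.sound' ⟨k + 1, ?_⟩
    rwa [Function.iterate_succ_apply, Function.iterate_succ_apply]
  have hFsurj := hco r hr F hFend hFinj
  -- each generator's image eventually lies in the next iterate's range
  have hgen : ∀ i : Fin n, ∃ (k : ℕ) (b : A), f^[k + 1] b = f^[k] (a i) := by
    intro i
    obtain ⟨q, hq⟩ := hFsurj (Quotient.mk'' (a i))
    induction q using Quotient.inductionOn' with
    | h b =>
      obtain ⟨k, hk⟩ : r (f b) (a i) := Quotient.eq''.mp hq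
      exact ⟨k, b, by rwa [Function.iterate_succ_apply]⟩
  choose K b hKb using hgen
  set m : ℕ := (Finset.univ.sup K) + 1 with hmdef
  refine ⟨m, Nat.le_add_left 1 _, ?_⟩
  apply Set.eq_of_subset_of_subset
  · rintro _ ⟨x, rfl⟩
    obtain ⟨i, s, rfl⟩ := ha x
    have hKi : K i ≤ m := le_trans (Finset.le_sup (Finset.mem_univ i)) (Nat.le_succ _)
    have key : f^[m] (a i) = f^[m + 1] (b i) := by
      have h1 : m = (m - K i) + K i := (Nat.sub_add_cancel hKi).symm
      have h2 : m + 1 = (m - K i) + (K i + 1) := by omega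
      rw [h1, Function.iterate_add_apply, ← hKb i, ← Function.iterate_add_apply, ← h2, h2,
        ← h1]
      congr 1
      omega
    exact ⟨M.act (b i) s, by rw [hIter, ← key, ← hIter]⟩
  · rintro _ ⟨x, rfl⟩
    exact ⟨f x, by rw [← Function.iterate_succ_apply]⟩
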